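/- Let δ > 0, I := [a, a+δ], u₀ ∈ E, β > 0, and let f : I × B̄(u₀,β) → E be continuous and satisfy ‖f(t,x) - f(t,y)‖_E ≤ κ·‖x-y‖_E for all t ∈ I and x, y ∈ B̄(u₀,β), where κ > 0 and B̄(u₀,β) is the closed ball in E of centre u₀ and radius β. For a continuous u : I → E with values in B̄(u₀,β) define (𝔉u)(t) := u₀ + (1/Γ(α)) ∫_a^t (t-s)^{α-1} f(s,u(s)) ds. Then for all such u, v: sup_{t∈I} ‖(𝔉u)(t) - (𝔉v)(t)‖_E ≤ (κ·δ^α/Γ(α+1))·sup_{t∈I} ‖u(t) - v(t)‖_E. -/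

import Mathlib

open MeasureTheory Set intervalIntegral

/-- Let `I = [a, a+δ]`, `f : I × B̄(u₀,β) → E` continuous and Lipschitz in the
second variable with constant `κ`, and let `𝔉` be the Volterra operator
`(𝔉u)(t) = u₀ + (1/Γ(α)) ∫_a^t (t-s)^{α-1} f(s,u(s)) ds`. Then for all continuous
`u, v : I → E` with values in `B̄(u₀,β)`,
`sup_{t∈I} ‖(𝔉u)(t) - (𝔉v)(t)‖ ≤ (κ δ^α/Γ(α+1)) · sup_{t∈I} ‖u(t) - v(t)‖`. -/
theorem volterra_operator_contraction_estimate
    {E : Type*} [NormedAddCommGroup E] [NormedSpace ℝ E] [CompleteSpace E]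
    (a α δ β κ : ℝ) (hδ : 0 < δ) (hα0 : 0 < α) (hα1 : α < 1) (hβ : 0 < β) (hκ : 0 < κ)
    (u₀ : E) (f : ℝ → E → E)
    (hfc : ContinuousOn (fun p : ℝ × E => f p.1 p.2)
      (Set.Icc a (a + δ) ×ˢ Metric.closedBall u₀ β))
    (hlip : ∀ t ∈ Set.Icc a (a + δ), ∀ x ∈ Metric.closedBall u₀ β,
      ∀ y ∈ Metric.closedBall u₀ β, ‖f t x - f t y‖ ≤ κ * ‖x - y‖)
    (u v : ℝ → E)
    (hu : ContinuousOn u (Set.Icc a (a + δ)))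
    (huB : ∀ t ∈ Set.Icc a (a + δ), u t ∈ Metric.closedBall u₀ β)
    (hv : ContinuousOn v (Set.Icc a (a + δ)))
    (hvB : ∀ t ∈ Set.Icc a (a + δ), v t ∈ Metric.closedBall u₀ β)
    (Fu Fv : ℝ → E)
    (hFu : ∀ t, Fu t = u₀ + (Real.Gamma α)⁻¹ • ∫ s in a..t, ((t - s) ^ (α - 1) : ℝ) • f s (u s))
    (hFv : ∀ t, Fv t = u₀ + (Real.Gamma α)⁻¹ • ∫ s in a..t, ((t - s) ^ (α - 1) : ℝ) • f s (v s)) :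
    sSup ((fun t => ‖Fu t - Fv t‖) '' Set.Icc a (a + δ))
      ≤ κ * δ ^ α / Real.Gamma (α + 1) *
        sSup ((fun t => ‖u t - v t‖) '' Set.Icc a (a + δ)) := by
  have haI : a ∈ Set.Icc a (a + δ) := ⟨le_refl a, by linarith⟩
  have hΓ : 0 < Real.Gamma α := Real.Gamma_pos_of_pos hα0
  have hΓ1 : Real.Gamma (α + 1) = α * Real.Gamma α := by
    rw [Real.Gamma_add_one hα0.ne']
  have hcont_uv : ContinuousOn (fun t => ‖u t - v t‖) (Set.Icc a (a + δ)) := (hu.sub hv).norm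
  have hbdd : BddAbove ((fun t => ‖u t - v t‖) '' Set.Icc a (a + δ)) :=
    (isCompact_Icc.image_of_continuousOn hcont_uv).bddAbove
  set M := sSup ((fun t => ‖u t - v t‖) '' Set.Icc a (a + δ)) with hMdef
  have hM : ∀ t ∈ Set.Icc a (a + δ), ‖u t - v t‖ ≤ M := fun t ht =>
    le_csSup hbdd ⟨t, ht, rfl⟩
  have hM0 : 0 ≤ M := le_trans (norm_nonneg _) (hM a haI)
  have hpow : ∀ t : ℝ, IntervalIntegrable (fun s : ℝ => (t - s) ^ (α - 1)) volume a t := by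
    intro t
    have := (intervalIntegrable_rpow' (by linarith : (-1 : ℝ) < α - 1)
      (a := t - a) (b := 0)).comp_sub_left t
    simpa using this
  -- integrability of the integrand
  have key : ∀ t ∈ Set.Icc a (a + δ), ∀ w : ℝ → E, ContinuousOn w (Set.Icc a (a + δ)) →
      (∀ s ∈ Set.Icc a (a + δ), w s ∈ Metric.closedBall u₀ β) →
      IntervalIntegrable (fun s => ((t - s) ^ (α - 1) : ℝ) • f s (w s)) volume a t := by
    intro t ht w hw hwB
    have hsub : Set.Icc a t ⊆ Set.Icc a (a + δ) := Set.Icc_subset_Icc le_rfl ht.2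
    have hg : ContinuousOn (fun s => f s (w s)) (Set.Icc a t) := by
      apply hfc.comp (continuousOn_id.prodMk (hw.mono hsub))
      intro s hs
      exact ⟨hsub hs, hwB s (hsub hs)⟩
    obtain ⟨C, hC⟩ := isCompact_Icc.exists_bound_of_continuousOn hg
    have hC0 : 0 ≤ C := le_trans (norm_nonneg _) (hC a ⟨le_rfl, ht.1⟩)
    apply ((hpow t).const_mul C).mono_fun
    · apply AEStronglyMeasurable.smul
      · exact ((measurable_const.sub measurable_id).pow measurable_const).aestronglyMeasurable
      · rw [Set.uIoc_of_le ht.1]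
        exact (hg.mono Set.Ioc_subset_Icc_self).aestronglyMeasurable measurableSet_Ioc
    · rw [Set.uIoc_of_le ht.1]
      filter_upwards [ae_restrict_mem measurableSet_Ioc] with s hs
      have h0 : (0 : ℝ) ≤ (t - s) ^ (α - 1) := Real.rpow_nonneg (by linarith [hs.2]) _
      rw [norm_smul, Real.norm_eq_abs, abs_of_nonneg h0, Real.norm_eq_abs,
        abs_of_nonneg (mul_nonneg hC0 h0)]
      rw [mul_comm C _]
      exact mul_le_mul_of_nonneg_left (hC s ⟨hs.1.le, hs.2⟩) h0
  -- pointwise estimate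
  have main : ∀ t ∈ Set.Icc a (a + δ),
      ‖Fu t - Fv t‖ ≤ κ * δ ^ α / Real.Gamma (α + 1) * M := by
    intro t ht
    have hat : a ≤ t := ht.1
    have hiu := key t ht u hu huB
    have hiv := key t ht v hv hvB
    have hdiff : Fu t - Fv t = (Real.Gamma α)⁻¹ •
        ∫ s in a..t, ((t - s) ^ (α - 1) : ℝ) • (f s (u s) - f s (v s)) := by
      rw [hFu, hFv, add_sub_add_left_eq_sub, ← smul_sub, ← integral_sub hiu hiv]
      congr 1
      apply intervalIntegral.integral_congr
      intro s _
      exact (smul_sub _ _ _).symm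
    -- norm of the integral
    have hbound : IntervalIntegrable (fun s : ℝ => κ * M * (t - s) ^ (α - 1)) volume a t :=
      (hpow t).const_mul _
    have hnorm : ‖∫ s in a..t, ((t - s) ^ (α - 1) : ℝ) • (f s (u s) - f s (v s))‖
        ≤ |∫ s in a..t, κ * M * (t - s) ^ (α - 1)| := by
      apply intervalIntegral.norm_integral_le_abs_of_norm_le _ hbound
      rw [Set.uIoc_of_le hat]
      filter_upwards [ae_restrict_mem measurableSet_Ioc] with s hs
      have hsI : s ∈ Set.Icc a (a + δ) := ⟨hs.1.le, le_trans hs.2 ht.2⟩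
      have h0 : (0 : ℝ) ≤ (t - s) ^ (α - 1) := Real.rpow_nonneg (by linarith [hs.2]) _
      rw [norm_smul, Real.norm_eq_abs, abs_of_nonneg h0]
      calc (t - s) ^ (α - 1) * ‖f s (u s) - f s (v s)‖
          ≤ (t - s) ^ (α - 1) * (κ * ‖u s - v s‖) :=
            mul_le_mul_of_nonneg_left (hlip s hsI _ (huB s hsI) _ (hvB s hsI)) h0
        _ ≤ (t - s) ^ (α - 1) * (κ * M) := by
            apply mul_le_mul_of_nonneg_left _ h0
            exact mul_le_mul_of_nonneg_left (hM s hsI) hκ.le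
        _ = κ * M * (t - s) ^ (α - 1) := by ring
    have hval : (∫ s in a..t, κ * M * (t - s) ^ (α - 1)) = κ * M * ((t - a) ^ α / α) := by
      rw [intervalIntegral.integral_const_mul]
      congr 1
      have h1 : (∫ s in a..t, ((t - s) ^ (α - 1) : ℝ))
          = ∫ x in (t - t)..(t - a), (x : ℝ) ^ (α - 1) :=
        intervalIntegral.integral_comp_sub_left (fun x => x ^ (α - 1)) t
      rw [h1, sub_self, integral_rpow (Or.inl (by linarith))]
      rw [sub_add_cancel, Real.zero_rpow hα0.ne', sub_zero]
    have hta : 0 ≤ t - a := by linarith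
    have habs : |∫ s in a..t, κ * M * (t - s) ^ (α - 1)| = κ * M * ((t - a) ^ α / α) := by
      rw [hval, abs_of_nonneg]
      positivity
    have hZ : ‖Fu t - Fv t‖ ≤ (Real.Gamma α)⁻¹ * (κ * M * ((t - a) ^ α / α)) := by
      rw [hdiff, norm_smul, Real.norm_eq_abs, abs_of_nonneg (inv_nonneg.2 hΓ.le)]
      exact mul_le_mul_of_nonneg_left (le_trans hnorm (le_of_eq habs)) (inv_nonneg.2 hΓ.le)
    have hδα : (t - a) ^ α ≤ δ ^ α := Real.rpow_le_rpow hta (by linarith [ht.2]) hα0.le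
    calc ‖Fu t - Fv t‖ ≤ (Real.Gamma α)⁻¹ * (κ * M * ((t - a) ^ α / α)) := hZ
      _ = κ * (t - a) ^ α / (α * Real.Gamma α) * M := by
          field_simp
      _ ≤ κ * δ ^ α / (α * Real.Gamma α) * M := by
          gcongr
      _ = κ * δ ^ α / Real.Gamma (α + 1) * M := by rw [hΓ1]
  apply Real.sSup_le
  · rintro x ⟨t, ht, rfl⟩
    exact main t ht
  · have : 0 ≤ κ * δ ^ α / Real.Gamma (α + 1) := by
      rw [hΓ1]; positivity
    exact mul_nonneg this hM0
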